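/- In the group G = ⟨f, v, u | f^n, v², (fv)^m, (fvuvu⁻¹)^k, [f,u]⟩ with m odd, the elements v and u lie in the subgroup generated by f and g := v·u·f^((n−1)/2); hence G is generated by f and g. -/

import Mathlib

open scoped commutatorElement

/-- Relations of `GTet₂[n,m,k] = ⟨f, v, u | fⁿ, v², (fv)^m, (fvuvu⁻¹)^k, [f,u]⟩`,
with generators `f = 0`, `v = 1`, `u = 2`. -/
def relsGTet2 (n m k : ℕ) : Set (FreeGroup (Fin 3)) :=
  {(FreeGroup.of 0) ^ n, (FreeGroup.of 1) ^ 2,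
    (FreeGroup.of 0 * FreeGroup.of 1) ^ m,
    (FreeGroup.of 0 * FreeGroup.of 1 * FreeGroup.of 2 * FreeGroup.of 1 *
      (FreeGroup.of 2)⁻¹) ^ k,
    ⁅(FreeGroup.of 0 : FreeGroup (Fin 3)), FreeGroup.of 2⁆}

lemma gtet2_rel (n m k : ℕ) {r : FreeGroup (Fin 3)} (hr : r ∈ relsGTet2 n m k) :
    PresentedGroup.mk (relsGTet2 n m k) r = 1 := by
  have : r ∈ Subgroup.normalClosure (relsGTet2 n m k) :=
    Subgroup.subset_normalClosure hr
  exact (QuotientGroup.eq_one_iff r).2 this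

/-- In `G = ⟨f, v, u | fⁿ, v², (fv)^m, (fvuvu⁻¹)^k, [f,u]⟩` with `m` odd,
both `v` and `u` lie in the subgroup generated by `f` and `g = v·u·f^((n−1)/2)`;
hence `G` is generated by `f` and `g`. -/
theorem gtet2_two_generated (n m k : ℕ) (hm : Odd m) :
    let f : PresentedGroup (relsGTet2 n m k) := PresentedGroup.of 0
    let v : PresentedGroup (relsGTet2 n m k) := PresentedGroup.of 1
    let u : PresentedGroup (relsGTet2 n m k) := PresentedGroup.of 2
    let g := v * u * f ^ ((n - 1) / 2)
    v ∈ Subgroup.closure {f, g} ∧ u ∈ Subgroup.closure {f, g} ∧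
      Subgroup.closure {f, g} = (⊤ : Subgroup (PresentedGroup (relsGTet2 n m k))) := by
  intro f v u g
  obtain ⟨t, ht⟩ := hm
  set s := (n - 1) / 2
  -- relations
  have hv : v ^ 2 = 1 := by
    have := gtet2_rel n m k (r := (FreeGroup.of 1) ^ 2) (by simp [relsGTet2])
    simpa [f, v, u, PresentedGroup.of] using this
  have hfv : (f * v) ^ m = 1 := by
    have := gtet2_rel n m k (r := (FreeGroup.of 0 * FreeGroup.of 1) ^ m)
      (by simp [relsGTet2])
    simpa [f, v, u, PresentedGroup.of] using this
  have hfu : f * u = u * f := by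
    have := gtet2_rel n m k (r := ⁅(FreeGroup.of 0 : FreeGroup (Fin 3)), FreeGroup.of 2⁆)
      (by simp [relsGTet2])
    have h1 : ⁅f, u⁆ = 1 := by
      simpa [f, v, u, PresentedGroup.of, commutatorElement_def] using this
    exact commutatorElement_eq_one_iff_mul_comm.mp h1
  have hvinv : v⁻¹ = v := by
    rw [← mul_left_cancel_iff (a := v), mul_inv_cancel, ← pow_two, hv]
  -- g f g⁻¹ = v f v
  have hconj : g * f * g⁻¹ = v * f * v := by
    have hfus : f ^ s * f = f * f ^ s := by rw [← pow_succ, ← pow_succ']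
    have hufu : u * f * u⁻¹ = f := by
      rw [← hfu]; group
    calc g * f * g⁻¹ = v * u * (f ^ s * f * (f ^ s)⁻¹) * u⁻¹ * v⁻¹ := by
          simp only [g, mul_inv_rev]; group
      _ = v * (u * f * u⁻¹) * v⁻¹ := by rw [hfus]; group
      _ = v * f * v := by rw [hufu, hvinv]
  have hsq : f * g * f * g⁻¹ = (f * v) ^ 2 := by
    have : f * (g * f * g⁻¹) = f * (v * f * v) := by rw [hconj]
    calc f * g * f * g⁻¹ = f * (g * f * g⁻¹) := by group
      _ = f * (v * f * v) := by rw [hconj]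
      _ = (f * v) ^ 2 := by rw [pow_two]; group
  -- v in terms of f, g
  have hveq : v = (f * g * f * g⁻¹) ^ t * f := by
    have h2t : (f * v) ^ (2 * t) * (f * v) = 1 := by
      rw [← pow_succ, ← ht] ; exact hfv
    have : (f * v) ^ (2 * t) = v * f⁻¹ := by
      have h3 : (f * v) ^ (2 * t) = (f * v)⁻¹ := eq_inv_of_mul_eq_one_left h2t
      rw [h3, mul_inv_rev, hvinv]
    rw [hsq, ← pow_mul, this]
    group
  have memf : f ∈ Subgroup.closure ({f, g} : Set (PresentedGroup (relsGTet2 n m k))) :=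
    Subgroup.subset_closure (by simp)
  have memg : g ∈ Subgroup.closure ({f, g} : Set (PresentedGroup (relsGTet2 n m k))) :=
    Subgroup.subset_closure (by simp)
  have memv : v ∈ Subgroup.closure ({f, g} : Set (PresentedGroup (relsGTet2 n m k))) := by
    rw [hveq]
    exact mul_mem (pow_mem (mul_mem (mul_mem (mul_mem memf memg) memf) (inv_mem memg)) t) memf
  have memu : u ∈ Subgroup.closure ({f, g} : Set (PresentedGroup (relsGTet2 n m k))) := by
    have hueq : u = v⁻¹ * g * (f ^ s)⁻¹ := by
      simp only [g]; group; simp [s]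
    rw [hueq]
    exact mul_mem (mul_mem (inv_mem memv) memg) (inv_mem (pow_mem memf s))
  refine ⟨memv, memu, ?_⟩
  rw [eq_top_iff, ← PresentedGroup.closure_range_of (relsGTet2 n m k)]
  apply Subgroup.closure_le _ |>.2
  rintro x ⟨i, rfl⟩
  fin_cases i
  · exact memf
  · exact memv
  · exact memu
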